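/- For every finite set C there exist a finite linearly ordered set Q with |Q| ≤ |C|^{|C|+1}, an initial state q₀ ∈ Q, a transition function δ : Q × C → Q, and a map φ : Q → 2^C with the following property: for every infinite word u ∈ C^ℕ, letting the run be r₀ = q₀ and r_{n+1} = δ(r_n, u_n), the set L^∞(u) of letters of C occurring infinitely often in u equals φ(m), where m is the largest state (for the order on Q) occurring infinitely often in the run (r_n)_{n∈ℕ}. -/

import Mathlib

namespace LARmem

private lemma mul_add_lt {F a b x : ℕ} (hx : x < F) (hab : a < b) :
    a * F + x < b * F :=
  calc a * F + x < a * F + F := by omega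
    _ = (a + 1) * F := by ring
    _ ≤ b * F := Nat.mul_le_mul_right F (Nat.succ_le_of_lt hab)

variable {C : Type} [Fintype C] [DecidableEq C] {nn : ℕ}

/-- The LAR state space: a hit position together with a letter → position bijection. -/
abbrev Q (C : Type) (nn : ℕ) : Type := Fin (nn + 1) × (C ≃ Fin (nn + 1))

noncomputable def enc (q : Q C nn) : ℕ :=
  q.1.val * Fintype.card (C ≃ Fin (nn + 1)) + (Fintype.equivFin (C ≃ Fin (nn + 1)) q.2).val

lemma enc_injective : Function.Injective (enc (C := C) (nn := nn)) := by
  rintro ⟨a, σ⟩ ⟨b, τ⟩ h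
  unfold enc at h
  simp only at h
  have h1 := (Fintype.equivFin (C ≃ Fin (nn + 1)) σ).isLt
  have h2 := (Fintype.equivFin (C ≃ Fin (nn + 1)) τ).isLt
  have hab : a.val = b.val := by
    rcases lt_trichotomy a.val b.val with hlt | heq | hgt
    · exact absurd h (by have := mul_add_lt h1 hlt; omega)
    · exact heq
    · exact absurd h (by have := mul_add_lt h2 hgt; omega)
  rw [hab] at h
  obtain rfl : a = b := Fin.ext hab
  obtain rfl : σ = τ := (Fintype.equivFin _).injective (Fin.ext (by omega))
  rfl

noncomputable instance : LinearOrder (Q C nn) := LinearOrder.lift' enc enc_injective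

lemma fst_le_of_le {q q' : Q C nn} (h : q ≤ q') : q.1 ≤ q'.1 := by
  have h' : enc q ≤ enc q' := h
  unfold enc at h'
  have h1 := (Fintype.equivFin (C ≃ Fin (nn + 1)) q.2).isLt
  have h2 := (Fintype.equivFin (C ≃ Fin (nn + 1)) q'.2).isLt
  by_contra hc
  have hgt : q'.1.val < q.1.val := Fin.lt_def.mp (not_le.mp hc)
  have := mul_add_lt h2 hgt
  omega

/-- LAR step: move the letter just read to the front, record its old position. -/
def step (q : Q C nn) (c : C) : Q C nn := (q.2 c, q.2.trans (q.2 c).cycleRange)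

/-- Read off the letters at positions up to the hit position. -/
def phiQ (q : Q C nn) : Set C := {c : C | q.2 c ≤ q.1}

lemma card_filter_lt (m v : ℕ) (hv : v ≤ m) :
    ((Finset.univ.filter fun i : Fin m => (i : ℕ) < v)).card = v := by
  rw [← Finset.card_range v]
  apply Finset.card_bij (fun (i : Fin m) _ => (i : ℕ))
  · intro i hi
    simp only [Finset.mem_filter, Finset.mem_univ, true_and] at hi
    simpa using hi
  · intro i _ j _ hij; exact Fin.ext hij
  · intro j hj
    have hj' : j < m := lt_of_lt_of_le (Finset.mem_range.mp hj) hv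
    exact ⟨⟨j, hj'⟩, by simp [Finset.mem_range.mp hj], rfl⟩

section Run

variable {u : ℕ → C} {R : ℕ → Q C nn}

/-- Position (ℕ-valued) of letter `d` at time `s`. -/
def pos (R : ℕ → Q C nn) (s : ℕ) (d : C) : ℕ := ((R s).2 d : ℕ)

lemma pos_lt (s : ℕ) (d : C) : pos R s d < nn + 1 := ((R s).2 d).isLt

lemma pos_inj {s : ℕ} {d d' : C} (h : pos R s d = pos R s d') : d = d' :=
  (R s).2.injective (Fin.ext h)

variable (hR : ∀ s, R (s + 1) = step (R s) (u s))
include hR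

lemma pos_succ_self (s : ℕ) : pos R (s + 1) (u s) = 0 := by
  unfold pos
  rw [hR s]
  show (((R s).2 (u s)).cycleRange ((R s).2 (u s)) : ℕ) = 0
  rw [Fin.cycleRange_self]
  rfl

lemma fst_succ (s : ℕ) : ((R (s + 1)).1 : ℕ) = pos R s (u s) := by rw [hR s]; rfl

lemma pos_succ_of_lt {s : ℕ} {d : C} (h : pos R s d < pos R s (u s)) :
    pos R (s + 1) d = pos R s d + 1 := by
  unfold pos at *
  rw [hR s]
  show (((R s).2 (u s)).cycleRange ((R s).2 d) : ℕ) = _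
  exact Fin.coe_cycleRange_of_lt (Fin.lt_def.mpr h)

lemma pos_succ_of_gt {s : ℕ} {d : C} (h : pos R s (u s) < pos R s d) :
    pos R (s + 1) d = pos R s d := by
  unfold pos at *
  rw [hR s]
  show (((R s).2 (u s)).cycleRange ((R s).2 d) : ℕ) = _
  rw [Fin.cycleRange_of_gt (Fin.lt_def.mpr h)]

/-- Core invariant: if `c` was last read at time `t` (and only letters of `L` are read
from `n₀` on), then at any later time the position of `c` is below `|L|`. -/
lemma posBound (L : Finset C) (n₀ : ℕ) (hL : ∀ s, n₀ ≤ s → u s ∈ L)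
    {c : C} (hc : c ∈ L) {t nend : ℕ} (ht0 : n₀ ≤ t) (hut : u t = c)
    (htn : t < nend) (hlast : ∀ s, t < s → s < nend → u s ≠ c) :
    pos R nend c < L.card := by
  have key : ∀ s, t + 1 ≤ s → s ≤ nend →
      ∀ d : C, pos R s d < pos R s c → d ∈ L.erase c := by
    intro s hs
    induction s, hs using Nat.le_induction with
    | base =>
      intro _ d hd
      have h0 : pos R (t + 1) c = 0 := by
        have := pos_succ_self hR t; rwa [hut] at this
      omega
    | succ s hs ih =>
      intro hsn d hd
      have hsn' : s ≤ nend := by omega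
      have hne : u s ≠ c := hlast s (by omega) (by omega)
      have huL : u s ∈ L := hL s (by omega)
      by_cases hde : d = u s
      · subst hde; exact Finset.mem_erase.mpr ⟨hne, huL⟩
      · have h1 : pos R s (u s) ≠ pos R s c := fun h => hne (pos_inj h)
        have h2 : pos R s d ≠ pos R s (u s) := fun h => hde (pos_inj h)
        have hc' : pos R (s + 1) c =
            if pos R s c < pos R s (u s) then pos R s c + 1 else pos R s c := by
          split_ifs with hh
          · exact pos_succ_of_lt hR hh
          · exact pos_succ_of_gt hR (by omega)
        have hd' : pos R (s + 1) d =
            if pos R s d < pos R s (u s) then pos R s d + 1 else pos R s d := by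
          split_ifs with hh
          · exact pos_succ_of_lt hR hh
          · exact pos_succ_of_gt hR (by omega)
        apply ih hsn'
        split_ifs at hc' hd' <;> omega
  have hsub : (Finset.univ.filter fun d : C => pos R nend d < pos R nend c) ⊆ L.erase c := by
    intro d hd
    exact key nend (by omega) le_rfl d (Finset.mem_filter.mp hd).2
  have hcard : (Finset.univ.filter fun d : C => pos R nend d < pos R nend c).card
      = pos R nend c := by
    have hb : (Finset.univ.filter fun d : C => pos R nend d < pos R nend c).card
        = (Finset.univ.filter fun i : Fin (nn + 1) => (i : ℕ) < pos R nend c).card := by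
      apply Finset.card_bij (fun d _ => (R nend).2 d)
      · intro d hd
        simp only [Finset.mem_filter, Finset.mem_univ, true_and] at *
        exact hd
      · intro d _ d' _ h; exact (R nend).2.injective h
      · intro i hi
        refine ⟨(R nend).2.symm i, ?_, by simp⟩
        simp only [Finset.mem_filter, Finset.mem_univ, true_and] at *
        unfold pos
        rw [Equiv.apply_symm_apply]
        exact hi
    rw [hb, card_filter_lt (nn + 1) (pos R nend c) (le_of_lt (pos_lt nend c))]
  have hle := Finset.card_le_card hsub
  have hcc : (L.erase c).card < L.card := Finset.card_erase_lt_of_mem hc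
  omega

/-- The main combinatorial lemma, at the level of the LAR state space. -/
theorem main_lemma (m : Q C nn) (hm : {s | R s = m}.Infinite)
    (hmax : ∀ q : Q C nn, {s | R s = q}.Infinite → q ≤ m) :
    {c : C | {s | u s = c}.Infinite} = phiQ m := by
  classical
  set L : Finset C := Finset.univ.filter fun c => {s | u s = c}.Infinite with hLdef
  have hLne : L.Nonempty := by
    by_contra hne
    have hfin : ∀ c : C, {s | u s = c}.Finite := by
      intro c
      by_contra hcf
      exact hne ⟨c, by rw [hLdef]; exact Finset.mem_filter.mpr ⟨Finset.mem_univ c, hcf⟩⟩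
    have huniv : (Set.univ : Set ℕ).Finite := by
      have he : (Set.univ : Set ℕ) = ⋃ c : C, {s | u s = c} := by ext s; simp
      rw [he]
      exact Set.finite_iUnion hfin
    exact Set.infinite_univ huniv
  have hk1 : 1 ≤ L.card := Finset.card_pos.mpr hLne
  have hkn : L.card ≤ nn + 1 := by
    have hcc := Fintype.card_congr (R 0).2
    calc L.card ≤ Fintype.card C := Finset.card_le_univ L
      _ = nn + 1 := by rw [hcc, Fintype.card_fin]
  obtain ⟨B, hB⟩ : ∃ B, ∀ s, u s ∉ L → s ≤ B := by
    have hfin : {s | u s ∉ L}.Finite := by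
      have hsub : {s | u s ∉ L} ⊆ ⋃ c ∈ {c : C | c ∉ L}, {s | u s = c} := by
        intro s hs
        exact Set.mem_biUnion hs rfl
      apply Set.Finite.subset _ hsub
      apply Set.Finite.biUnion (Set.toFinite _)
      intro c hc
      have hni : ¬ {s | u s = c}.Infinite := by
        intro hinf
        exact hc (by rw [hLdef]; exact Finset.mem_filter.mpr ⟨Finset.mem_univ c, hinf⟩)
      exact Set.not_infinite.mp hni
    rcases hfin.bddAbove with ⟨B, hB⟩
    exact ⟨B, fun s hs => hB hs⟩
  set n₀ := B + 1 with hn₀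
  have hL0 : ∀ s, n₀ ≤ s → u s ∈ L := by
    intro s hs
    by_contra hns
    have := hB s hns
    omega
  have hvis : ∀ c : C, ∃ t, c ∈ L → (n₀ ≤ t ∧ u t = c) := by
    intro c
    by_cases hc : c ∈ L
    · have hinf : {s | u s = c}.Infinite := by
        have := hc; rw [hLdef] at this; exact (Finset.mem_filter.mp this).2
      obtain ⟨t, ht, hgt⟩ := hinf.exists_gt n₀
      exact ⟨t, fun _ => ⟨le_of_lt hgt, ht⟩⟩
    · exact ⟨0, fun h => absurd h hc⟩
  choose f hf using hvis
  set n₁ := max n₀ (Finset.univ.sup fun c : C => f c + 1) with hn₁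
  have hn₁0 : n₀ ≤ n₁ := le_max_left _ _
  have hvis' : ∀ c ∈ L, ∃ t, n₀ ≤ t ∧ t < n₁ ∧ u t = c := by
    intro c hc
    refine ⟨f c, (hf c hc).1, ?_, (hf c hc).2⟩
    have hsup : f c + 1 ≤ Finset.univ.sup fun c : C => f c + 1 :=
      Finset.le_sup (f := fun c : C => f c + 1) (Finset.mem_univ c)
    omega
  have hposb : ∀ nend, n₁ ≤ nend → ∀ c ∈ L, pos R nend c < L.card := by
    intro nend hn c hc
    obtain ⟨t0, ht0, ht1, ht2⟩ := hvis' c hc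
    set S := (Finset.range nend).filter fun t => n₀ ≤ t ∧ u t = c with hS
    have hSne : S.Nonempty :=
      ⟨t0, Finset.mem_filter.mpr ⟨Finset.mem_range.mpr (by omega), ht0, ht2⟩⟩
    have htS := S.max'_mem hSne
    have htprop := Finset.mem_filter.mp htS
    have htr : S.max' hSne < nend := Finset.mem_range.mp htprop.1
    apply posBound hR L n₀ hL0 hc htprop.2.1 htprop.2.2 htr
    intro s hts hsn hus
    have hsS : s ∈ S := Finset.mem_filter.mpr ⟨Finset.mem_range.mpr hsn, by omega, hus⟩
    have := S.le_max' s hsS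
    omega
  have hsurj : ∀ s, n₁ ≤ s → ∀ i : Fin (nn + 1), (i : ℕ) < L.card →
      ∃ c ∈ L, (R s).2 c = i := by
    intro s hs i hi
    have himg : L.image (fun c => (R s).2 c) ⊆
        Finset.univ.filter (fun j : Fin (nn + 1) => (j : ℕ) < L.card) := by
      intro j hj
      obtain ⟨c, hc, rfl⟩ := Finset.mem_image.mp hj
      exact Finset.mem_filter.mpr ⟨Finset.mem_univ _, hposb s hs c hc⟩
    have heq : L.image (fun c => (R s).2 c) =
        Finset.univ.filter (fun j : Fin (nn + 1) => (j : ℕ) < L.card) := by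
      apply Finset.eq_of_subset_of_card_le himg
      rw [Finset.card_image_of_injective L (R s).2.injective,
        card_filter_lt (nn + 1) L.card hkn]
    have hmem : i ∈ L.image (fun c => (R s).2 c) := by
      rw [heq]
      exact Finset.mem_filter.mpr ⟨Finset.mem_univ _, hi⟩
    obtain ⟨c, hc, hci⟩ := Finset.mem_image.mp hmem
    exact ⟨c, hc, hci⟩
  have hhit : ∀ s, n₁ + 1 ≤ s → ((R s).1 : ℕ) < L.card := by
    intro s hs
    obtain ⟨s', rfl⟩ : ∃ s', s = s' + 1 := ⟨s - 1, by omega⟩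
    rw [fst_succ hR]
    exact hposb s' (by omega) (u s') (hL0 s' (by omega))
  have hkfin : L.card - 1 < nn + 1 := by omega
  set kf : Fin (nn + 1) := ⟨L.card - 1, hkfin⟩ with hkf
  have hilo : ∀ A, ∃ s, A < s ∧ (R s).1 = kf := by
    intro A
    set s₀ := max (A + 1) n₁ with hs₀
    obtain ⟨c, hcL, hcpos⟩ := hsurj s₀ (le_max_right _ _) kf (by show L.card - 1 < L.card; omega)
    have hcinf : {s | u s = c}.Infinite := by
      have := hcL; rw [hLdef] at this; exact (Finset.mem_filter.mp this).2
    obtain ⟨t, htc, hts⟩ := hcinf.exists_gt s₀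
    have hex : ∃ t, s₀ ≤ t ∧ u t = c := ⟨t, by omega, htc⟩
    have ht1p := Nat.find_spec hex
    set t1 := Nat.find hex with ht1
    have hstay : ∀ s2, s₀ ≤ s2 → s2 ≤ t1 → pos R s2 c = L.card - 1 := by
      intro s2 hs2
      induction s2, hs2 using Nat.le_induction with
      | base =>
        intro _
        unfold pos
        rw [hcpos]
      | succ s2 hs2 ih =>
        intro hle
        have hus_ne : u s2 ≠ c := by
          intro he
          have : t1 ≤ s2 := Nat.find_le ⟨hs2, he⟩
          omega
        have hps : pos R s2 c = L.card - 1 := ih (by omega)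
        have husL : u s2 ∈ L := hL0 s2 (by omega)
        have hlt1 : pos R s2 (u s2) < L.card := hposb s2 (by omega) _ husL
        have hlt2 : pos R s2 (u s2) ≠ pos R s2 c := fun h => hus_ne (pos_inj h)
        have hlt3 : pos R s2 (u s2) < pos R s2 c := by omega
        rw [pos_succ_of_gt hR hlt3, hps]
    refine ⟨t1 + 1, by omega, ?_⟩
    apply Fin.ext
    rw [fst_succ hR, ht1p.2]
    exact hstay t1 ht1p.1 le_rfl
  have hinfH : {s | (R s).1 = kf}.Infinite :=
    Set.infinite_of_forall_exists_gt (fun A => by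
      obtain ⟨s, h1, h2⟩ := hilo A
      exact ⟨s, h2, h1⟩)
  have hpig : ∃ π : C ≃ Fin (nn + 1), {s | R s = (kf, π)}.Infinite := by
    by_contra hno
    push_neg at hno
    have hun : {s | (R s).1 = kf} = ⋃ π : C ≃ Fin (nn + 1), {s | R s = (kf, π)} := by
      ext s
      simp only [Set.mem_setOf_eq, Set.mem_iUnion]
      constructor
      · intro h
        exact ⟨(R s).2, by rw [← h]⟩
      · rintro ⟨π, h⟩
        rw [h]
    rw [hun] at hinfH
    exact hinfH (Set.finite_iUnion fun π => hno π)
  obtain ⟨π1, hπ1⟩ := hpig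
  have hle : (kf, π1) ≤ m := hmax _ hπ1
  have hm1 : kf ≤ m.1 := fst_le_of_le hle
  obtain ⟨s, hsm, hsgt⟩ := hm.exists_gt (n₁ + 1)
  have hml : ((R s).1 : ℕ) < L.card := hhit s (by omega)
  rw [hsm] at hml
  have hm1v : (m.1 : ℕ) = L.card - 1 := by
    have h' : L.card - 1 ≤ (m.1 : ℕ) := hm1
    omega
  ext c
  simp only [Set.mem_setOf_eq, phiQ]
  constructor
  · intro hcinf
    have hcL : c ∈ L := by
      rw [hLdef]; exact Finset.mem_filter.mpr ⟨Finset.mem_univ _, hcinf⟩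
    have hpc := hposb s (by omega) c hcL
    have h2 : ((m.2 c : ℕ)) < L.card := by
      unfold pos at hpc
      rw [hsm] at hpc
      exact hpc
    show m.2 c ≤ m.1
    exact Fin.le_def.mpr (by omega)
  · intro hφ
    have hφ' : m.2 c ≤ m.1 := hφ
    have hv : (m.2 c : ℕ) < L.card := by
      have := Fin.le_def.mp hφ'
      omega
    obtain ⟨c', hc'L, hc'⟩ := hsurj s (by omega) (m.2 c) hv
    rw [hsm] at hc'
    obtain rfl : c' = c := m.2.injective hc'
    have := hc'L
    rw [hLdef] at this
    exact (Finset.mem_filter.mp this).2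

end Run

end LARmem

/-- The Last Appearance Record (LAR) memory lemma: for every finite (nonempty)
alphabet `C` there is a deterministic automaton, with a linearly ordered state
space `Fin N` of size at most `|C|^(|C|+1)`, such that for every infinite word
`u`, the set of letters occurring infinitely often in `u` is determined, via a
fixed map `φ`, by the largest state occurring infinitely often in the run. -/
theorem stmt_2 (C : Type) [Fintype C] [Nonempty C] :
    ∃ (N : ℕ) (q₀ : Fin N) (δ : Fin N → C → Fin N) (φ : Fin N → Set C),
      N ≤ Fintype.card C ^ (Fintype.card C + 1) ∧
      ∀ (u : ℕ → C) (r : ℕ → Fin N),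
        r 0 = q₀ → (∀ n : ℕ, r (n + 1) = δ (r n) (u n)) →
        ∀ m : Fin N, {n : ℕ | r n = m}.Infinite →
          (∀ q : Fin N, {n : ℕ | r n = q}.Infinite → q ≤ m) →
          {c : C | {n : ℕ | u n = c}.Infinite} = φ m := by
  classical
  obtain ⟨nn, hcard⟩ : ∃ nn, Fintype.card C = nn + 1 :=
    ⟨Fintype.card C - 1, (Nat.succ_pred_eq_of_pos Fintype.card_pos).symm⟩
  have ec : C ≃ Fin (nn + 1) := (Fintype.equivFin C).trans (finCongr hcard)
  set N := Fintype.card (LARmem.Q C nn) with hN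
  have e : Fin N ≃o LARmem.Q C nn := monoEquivOfFin _ hN.symm
  refine ⟨N, e.symm (0, ec), fun q c => e.symm (LARmem.step (e q) c),
    fun q => LARmem.phiQ (e q), ?_, ?_⟩
  · have h1 : Fintype.card (C ≃ Fin (nn + 1)) = Nat.factorial (nn + 1) := by
      rw [Fintype.card_equiv ec, hcard]
    have h2 : N = (nn + 1) * Nat.factorial (nn + 1) := by
      rw [hN, Fintype.card_prod, Fintype.card_fin, h1]
    rw [h2, hcard]
    calc (nn + 1) * Nat.factorial (nn + 1)
        ≤ (nn + 1) * (nn + 1) ^ (nn + 1) :=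
          Nat.mul_le_mul_left _ (Nat.factorial_le_pow _)
      _ = (nn + 1) ^ (nn + 1 + 1) := by ring
  · intro u r hr0 hrec m hm hmax
    have hR : ∀ s, (fun s => e (r s)) (s + 1) = LARmem.step ((fun s => e (r s)) s) (u s) := by
      intro s
      simp only
      rw [hrec s]
      exact e.apply_symm_apply _
    have hm' : {s | e (r s) = e m}.Infinite := by
      have hst : {s | e (r s) = e m} = {s | r s = m} := by
        ext s
        exact e.injective.eq_iff
      rw [hst]
      exact hm
    have hmax' : ∀ q : LARmem.Q C nn, {s | e (r s) = q}.Infinite → q ≤ e m := by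
      intro q hq
      have h1 : {s | r s = e.symm q}.Infinite := by
        have hst : {s | e (r s) = q} = {s | r s = e.symm q} := by
          ext s
          simp only [Set.mem_setOf_eq]
          constructor
          · intro h
            rw [← h, e.symm_apply_apply]
          · intro h
            rw [h, e.apply_symm_apply]
        rwa [hst] at hq
      have h2 := hmax _ h1
      have h3 := e.monotone h2
      rwa [e.apply_symm_apply] at h3
    exact LARmem.main_lemma hR (e m) hm' hmax'
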